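/- arXiv:1503.01943 — 7 statements merged into one kernel-verified Lean document; each statement's English description precedes it below -/
import Mathlib

section
/- Let η̃ > 0 and fix η' ∈ (0, 2η̃). Then there exists a constant C > 0, depending only on η', with the following property: for every closed axis-parallel square B_Y ⊆ ℝ² of side length L > 0 (so that diam(B_Y) = √2·L), every set D_X ⊆ ℝ² with dist(B_Y, D_X) ≥ η̃·√2·L, and every integer r ≥ 1, there exist functions g_{1,1},…,g_{1,r} : ℝ² → ℝ and g_{2,1},…,g_{2,r} : ℝ² → ℝ such that for all x ∈ D_X and all y ∈ B_Y one has |−(1/(2π))·log‖x−y‖ − Σ_{i=1}^{r} g_{1,i}(x)·g_{2,i}(y)| ≤ C·(1 + 1/η̃)·(1+η')^{−r^{1/2}}. -/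
open Real Metric

/-- The closed axis-parallel square in `ℝ²` with lower corner `a` and side length `L`. -/
def square2 (a : EuclideanSpace ℝ (Fin 2)) (L : ℝ) : Set (EuclideanSpace ℝ (Fin 2)) :=
  {y | ∀ i : Fin 2, a i ≤ y i ∧ y i ≤ a i + L}

noncomputable section AuxiliaryForDKA

namespace DKAaux

/-- Identification of `ℝ²` with `ℂ`. -/
def zc (v : EuclideanSpace ℝ (Fin 2)) : ℂ := ⟨v 0, v 1⟩

lemma zc_abs (v : EuclideanSpace ℝ (Fin 2)) : ‖zc v‖ = ‖v‖ := by
  rw [EuclideanSpace.norm_eq, Complex.norm_def, Complex.normSq_mk]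
  simp [zc, Fin.sum_univ_two, Real.norm_eq_abs, sq_abs, pow_two]

lemma zc_sub (x y : EuclideanSpace ℝ (Fin 2)) : zc (x - y) = zc x - zc y := by
  apply Complex.ext <;> simp [zc, PiLp.sub_apply]

lemma log_tail (m : ℕ) (w : ℂ) (hw : ‖w‖ ≤ 1/2) :
    |Real.log (‖1 - w‖) + ∑ s ∈ Finset.range (m+1), (w ^ s).re / s| ≤ (1/2)^m := by
  have hw' : ‖w‖ ≤ 1/2 := by exact hw
  have hw1 : ‖(-w)‖ < 1 := by rw [norm_neg]; linarith
  have hT := Complex.norm_log_sub_logTaylor_le m hw1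
  have hTaylor : Complex.logTaylor (m+1) (-w) = -∑ s ∈ Finset.range (m+1), w ^ s / s := by
    rw [Complex.logTaylor, ← Finset.sum_neg_distrib]
    refine Finset.sum_congr rfl fun j _ => ?_
    have ho : Odd (j + 1 + j) := ⟨j, by ring⟩
    rw [neg_pow w, ← mul_assoc, ← pow_add, ho.neg_one_pow]
    ring
  rw [hTaylor, sub_neg_eq_add] at hT
  have h1 : (1 : ℂ) + -w = 1 - w := by ring
  rw [h1] at hT
  have hre : |(Complex.log (1 - w) + ∑ s ∈ Finset.range (m+1), w ^ s / s).re|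
      ≤ ‖Complex.log (1 - w) + ∑ s ∈ Finset.range (m+1), w ^ s / s‖ := by
    exact Complex.abs_re_le_norm _
  have hrw : (Complex.log (1 - w) + ∑ s ∈ Finset.range (m+1), w ^ s / s).re
      = Real.log (‖1 - w‖) + ∑ s ∈ Finset.range (m+1), (w ^ s).re / s := by
    rw [Complex.add_re, Complex.log_re]
    congr 1
    rw [Complex.re_sum]
    refine Finset.sum_congr rfl fun j _ => ?_
    have : (j : ℂ) = ((j : ℝ) : ℂ) := by push_cast; ring
    rw [this, Complex.div_ofReal_re]
  rw [hrw] at hre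
  refine hre.trans (hT.trans ?_)
  rw [norm_neg]
  have h2 : ‖w‖ ^ (m+1) ≤ (1/2)^(m+1) := pow_le_pow_left₀ (norm_nonneg w) hw' (m+1)
  have h3 : (1 - ‖w‖)⁻¹ ≤ 2 := by
    rw [inv_le_comm₀ (by linarith) (by norm_num)]
    linarith
  calc ‖w‖ ^ (m+1) * (1 - ‖w‖)⁻¹ / (m+1)
      ≤ (1/2)^(m+1) * 2 / 1 := by
        apply div_le_div₀ (by positivity)
          (mul_le_mul h2 h3 (inv_nonneg.mpr (by linarith)) (by positivity)) one_pos
        exact_mod_cast Nat.succ_le_succ (Nat.zero_le m)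
    _ = (1/2)^m := by rw [pow_succ]; ring

lemma core_bound (m : ℕ) (a b : ℂ) (ha : a ≠ 0) (hb : ‖b‖ ≤ ‖a‖ / 2) :
    |Real.log (‖a - b‖) - Real.log (‖a‖)
      + ∑ s ∈ Finset.range (m+1), ((b/a) ^ s).re / s| ≤ (1/2)^m := by
  have ha0 : 0 < ‖a‖ := by simpa [norm_pos_iff] using ha
  set w : ℂ := b / a with hwdef
  have hw : ‖w‖ ≤ 1/2 := by
    rw [hwdef, norm_div, div_le_iff₀ ha0]; linarith
  have hab : a - b = a * (1 - w) := by rw [hwdef, mul_sub, mul_one, mul_div_assoc', mul_div_cancel_left₀ _ ha]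
  have h1w : (0:ℝ) < ‖1 - w‖ := by
    have h := norm_sub_norm_le (1:ℂ) w
    simp only [norm_one] at h
    linarith
  have hmul : ‖a - b‖ = ‖a‖ * ‖1 - w‖ := by
    rw [hab, norm_mul]
  rw [hmul, Real.log_mul ha0.ne' h1w.ne']
  refine le_trans (le_of_eq ?_) (log_tail m w hw)
  congr 1
  ring

lemma key_exp (β : ℝ) (hβ : 0 < β) (n : ℕ) (hn : 1 ≤ n) (r m : ℕ)
    (hm : (r:ℝ)/(8*n^2) - 1 ≤ m) :
    ((1:ℝ)/2)^m ≤ 2 * Real.exp (β^2 * (2*n^2) / Real.log 2) * Real.exp (-(β * Real.sqrt r)) := by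
  have hlog2 : (0:ℝ) < Real.log 2 := Real.log_pos (by norm_num)
  have hn' : (0:ℝ) < (n:ℝ) := by exact_mod_cast hn
  set α : ℝ := Real.log 2 / (8*n^2) with hα
  have hα0 : 0 < α := by positivity
  set s : ℝ := Real.sqrt r with hs
  have hs0 : 0 ≤ s := Real.sqrt_nonneg _
  have hs2 : s^2 = r := Real.sq_sqrt (Nat.cast_nonneg r)
  have key : β*s - α*s^2 ≤ β^2/(4*α) := by
    rw [le_div_iff₀ (by positivity)]
    nlinarith [sq_nonneg (2*α*s - β)]
  have hβα : β^2/(4*α) = β^2 * (2*n^2) / Real.log 2 := by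
    rw [hα]; field_simp; ring
  have hαr : α * s^2 ≤ (m+1) * Real.log 2 := by
    rw [hs2, hα]
    rw [div_mul_eq_mul_div, mul_comm, ← div_mul_eq_mul_div]
    calc (r:ℝ)/(8*n^2) * Real.log 2 ≤ ((m:ℝ)+1) * Real.log 2 := by
          apply mul_le_mul_of_nonneg_right _ hlog2.le
          linarith
      _ = (m+1) * Real.log 2 := by norm_num
  have hexp : ((1:ℝ)/2)^m = Real.exp (-((m:ℝ) * Real.log 2)) := by
    rw [Real.exp_neg, Real.exp_nat_mul, Real.exp_log (by norm_num : (0:ℝ) < 2)]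
    rw [one_div, inv_pow]
  rw [hexp]
  have h2 : (2:ℝ) = Real.exp (Real.log 2) := (Real.exp_log (by norm_num)).symm
  calc Real.exp (-((m:ℝ) * Real.log 2))
      ≤ Real.exp (Real.log 2 + β^2 * (2*n^2) / Real.log 2 + -(β * s)) := by
        apply Real.exp_le_exp.mpr
        have h3 : β * s ≤ α*s^2 + β^2/(4*α) := by linarith
        rw [hβα] at h3
        linarith [hαr]
    _ = 2 * Real.exp (β^2 * (2*n^2) / Real.log 2) * Real.exp (-(β * s)) := by
        rw [Real.exp_add, Real.exp_add, ← h2]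

lemma exists_separable {α : Type*} {ι : Type*} [DecidableEq ι] (s : Finset ι) (r : ℕ)
    (h : s.card ≤ r) (u v : ι → α → ℝ) :
    ∃ g₁ g₂ : Fin r → α → ℝ, ∀ x y : α,
      ∑ i : Fin r, g₁ i x * g₂ i y = ∑ p ∈ s, u p x * v p y := by
  classical
  let e := s.equivFin
  let G₁ : ℕ → α → ℝ := fun j x => if h' : j < s.card then u (e.symm ⟨j, h'⟩) x else 0
  let G₂ : ℕ → α → ℝ := fun j y => if h' : j < s.card then v (e.symm ⟨j, h'⟩) y else 0
  refine ⟨fun i => G₁ i.val, fun i => G₂ i.val, fun x y => ?_⟩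
  have h1 : ∑ i : Fin r, G₁ i.val x * G₂ i.val y
      = ∑ j ∈ Finset.range r, G₁ j x * G₂ j y := by
    rw [Finset.sum_range fun j => G₁ j x * G₂ j y]
  rw [h1]
  rw [← Finset.sum_subset (Finset.range_subset_range.mpr h)
    (fun j _ hj => by
      simp only [Finset.mem_range, not_lt] at hj
      simp [G₁, dif_neg (not_lt.mpr hj)])]
  have h2 : ∑ j ∈ Finset.range s.card, G₁ j x * G₂ j y
      = ∑ j : Fin s.card, G₁ j.val x * G₂ j.val y := by
    rw [Finset.sum_range fun j => G₁ j x * G₂ j y]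
  rw [h2]
  have h3 : ∀ j : Fin s.card, G₁ j.val x * G₂ j.val y
      = u (e.symm j) x * v (e.symm j) y := by
    intro j
    simp [G₁, G₂, dif_pos j.isLt]
  rw [Finset.sum_congr rfl (fun j _ => h3 j)]
  rw [Equiv.sum_comp e.symm (fun p : {z // z ∈ s} => u p.val x * v p.val y)]
  exact Finset.sum_coe_sort s (fun p => u p x * v p y)

/-- Center of the `(p,q)` subsquare of the square with corner `a`, side `L`, split `n×n`. -/
def sqctr (a : EuclideanSpace ℝ (Fin 2)) (L : ℝ) (n p q : ℕ) : EuclideanSpace ℝ (Fin 2) :=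
  (WithLp.equiv 2 (Fin 2 → ℝ)).symm ![a 0 + ((p:ℝ)+1/2)*(L/n), a 1 + ((q:ℝ)+1/2)*(L/n)]

lemma sqctr_apply0 (a : EuclideanSpace ℝ (Fin 2)) (L : ℝ) (n p q : ℕ) :
    sqctr a L n p q 0 = a 0 + ((p:ℝ)+1/2)*(L/n) := rfl
lemma sqctr_apply1 (a : EuclideanSpace ℝ (Fin 2)) (L : ℝ) (n p q : ℕ) :
    sqctr a L n p q 1 = a 1 + ((q:ℝ)+1/2)*(L/n) := rfl

/-- Index of the subsquare containing `y`, first coordinate. -/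
def Jp (a : EuclideanSpace ℝ (Fin 2)) (L : ℝ) (n : ℕ) (y : EuclideanSpace ℝ (Fin 2)) : ℕ :=
  min (n-1) ⌊(y 0 - a 0) * n / L⌋₊
/-- Index of the subsquare containing `y`, second coordinate. -/
def Jq (a : EuclideanSpace ℝ (Fin 2)) (L : ℝ) (n : ℕ) (y : EuclideanSpace ℝ (Fin 2)) : ℕ :=
  min (n-1) ⌊(y 1 - a 1) * n / L⌋₊

lemma sqctr_mem (a : EuclideanSpace ℝ (Fin 2)) {L : ℝ} (hL : 0 < L) {n p q : ℕ}
    (hn : 1 ≤ n) (hp : p ≤ n-1) (hq : q ≤ n-1) : sqctr a L n p q ∈ square2 a L := by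
  have hn' : (0:ℝ) < (n:ℝ) := by exact_mod_cast hn
  have key : ∀ j : ℕ, j ≤ n-1 →
      0 ≤ ((j:ℝ)+1/2)*(L/n) ∧ ((j:ℝ)+1/2)*(L/n) ≤ L := by
    intro j hj
    have hj' : (j:ℝ) ≤ (n:ℝ) - 1 := by
      have h1 : (j:ℝ) ≤ ((n-1 : ℕ):ℝ) := Nat.cast_le.mpr hj
      rw [Nat.cast_sub hn] at h1
      push_cast at h1 ⊢
      linarith
    refine ⟨by positivity, ?_⟩
    calc ((j:ℝ)+1/2)*(L/n) ≤ (n:ℝ)*(L/n) := by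
          apply mul_le_mul_of_nonneg_right (by linarith) (by positivity)
      _ = L := by field_simp
  intro i
  fin_cases i
  · show a 0 ≤ sqctr a L n p q 0 ∧ sqctr a L n p q 0 ≤ a 0 + L
    rw [sqctr_apply0]
    exact ⟨by linarith [(key p hp).1], by linarith [(key p hp).2]⟩
  · show a 1 ≤ sqctr a L n p q 1 ∧ sqctr a L n p q 1 ≤ a 1 + L
    rw [sqctr_apply1]
    exact ⟨by linarith [(key q hq).1], by linarith [(key q hq).2]⟩

lemma norm2_le' {v : EuclideanSpace ℝ (Fin 2)} {b : ℝ} (h0 : |v 0| ≤ b) (h1 : |v 1| ≤ b) :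
    ‖v‖ ≤ Real.sqrt 2 * b := by
  have hb : 0 ≤ b := le_trans (abs_nonneg _) h0
  rw [EuclideanSpace.norm_eq]
  simp only [Fin.sum_univ_two, Real.norm_eq_abs, sq_abs]
  have h2 : v 0 ^ 2 + v 1 ^ 2 ≤ 2 * b^2 := by
    nlinarith [abs_nonneg (v 0), abs_nonneg (v 1), sq_abs (v 0), sq_abs (v 1)]
  calc Real.sqrt (v 0 ^ 2 + v 1 ^ 2) ≤ Real.sqrt (2 * b^2) := Real.sqrt_le_sqrt h2
    _ = Real.sqrt 2 * b := by rw [Real.sqrt_mul (by norm_num), Real.sqrt_sq hb]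

lemma coord_near' (L : ℝ) (hL : 0 < L) (n : ℕ) (hn : 1 ≤ n) {w : ℝ} (h0 : 0 ≤ w) (h1 : w ≤ L) :
    |w - ((min (n-1) ⌊w * n / L⌋₊ : ℕ) + 1/2) * (L / n)| ≤ L/(2*n) := by
  have hn' : (0:ℝ) < (n:ℝ) := by exact_mod_cast hn
  set t : ℝ := w * n / L with ht
  have ht0 : 0 ≤ t := by positivity
  have htn : t ≤ n := by
    rw [ht, div_le_iff₀ hL]
    calc w * n ≤ L * n := by nlinarith
      _ = (n:ℝ) * L := by ring
  set p : ℕ := min (n-1) ⌊t⌋₊ with hp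
  have hpt : (p:ℝ) ≤ t := by
    calc (p:ℝ) ≤ (⌊t⌋₊:ℝ) := by exact_mod_cast min_le_right _ _
      _ ≤ t := Nat.floor_le ht0
  have htp : t ≤ (p:ℝ) + 1 := by
    rcases le_or_gt ⌊t⌋₊ (n-1) with hc | hc
    · have hpe : p = ⌊t⌋₊ := min_eq_right hc
      rw [hpe]
      exact (Nat.lt_floor_add_one t).le
    · have hp' : p = n - 1 := min_eq_left hc.le
      rw [hp', Nat.cast_sub hn]
      push_cast
      linarith
  have hw : w = t * (L / n) := by rw [ht]; field_simp
  have heq : w - ((p:ℝ) + 1/2) * (L/n) = (t - ((p:ℝ)+1/2)) * (L/n) := by rw [hw]; ring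
  rw [heq, abs_mul, abs_of_pos (by positivity : (0:ℝ) < L/n)]
  have habs : |t - ((p:ℝ)+1/2)| ≤ 1/2 := by
    rw [abs_le]; constructor <;> linarith
  calc |t - ((p:ℝ)+1/2)| * (L/n) ≤ (1/2) * (L/n) :=
        mul_le_mul_of_nonneg_right habs (by positivity)
    _ = L/(2*n) := by ring

lemma near_center (a : EuclideanSpace ℝ (Fin 2)) {L : ℝ} (hL : 0 < L) {n : ℕ} (hn : 1 ≤ n)
    {y : EuclideanSpace ℝ (Fin 2)} (hy : y ∈ square2 a L) :
    ‖y - sqctr a L n (Jp a L n y) (Jq a L n y)‖ ≤ Real.sqrt 2 * (L/(2*n)) := by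
  apply norm2_le'
  · have h0 := (hy 0).1
    have h1 := (hy 0).2
    have h := coord_near' L hL n hn (w := y 0 - a 0) (by linarith) (by linarith)
    have heq : (y - sqctr a L n (Jp a L n y) (Jq a L n y)) 0
        = (y 0 - a 0) - ((Jp a L n y : ℝ) + 1/2) * (L/n) := by
      rw [PiLp.sub_apply, sqctr_apply0]; ring
    rw [heq]
    exact h
  · have h0 := (hy 1).1
    have h1 := (hy 1).2
    have h := coord_near' L hL n hn (w := y 1 - a 1) (by linarith) (by linarith)
    have heq : (y - sqctr a L n (Jp a L n y) (Jq a L n y)) 1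
        = (y 1 - a 1) - ((Jq a L n y : ℝ) + 1/2) * (L/n) := by
      rw [PiLp.sub_apply, sqctr_apply1]; ring
    rw [heq]
    exact h

lemma log_ratio {A B d e : ℝ} (hdA : d ≤ A) (hdB : d ≤ B) (hd : 0 < d) (hAB : |A - B| ≤ e) :
    |Real.log A - Real.log B| ≤ e / d := by
  have hA : 0 < A := lt_of_lt_of_le hd hdA
  have hB : 0 < B := lt_of_lt_of_le hd hdB
  have he : 0 ≤ e := le_trans (abs_nonneg _) hAB
  have habs := abs_le.mp hAB
  rw [abs_le]
  constructor
  · have h1 : Real.log B - Real.log A ≤ (B - A)/A := by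
      rw [← Real.log_div hB.ne' hA.ne']
      calc Real.log (B/A) ≤ B/A - 1 := Real.log_le_sub_one_of_pos (by positivity)
        _ = (B-A)/A := by field_simp
    have h2 : (B-A)/A ≤ e/d := div_le_div₀ he (by linarith) hd hdA
    linarith
  · have h1 : Real.log A - Real.log B ≤ (A - B)/B := by
      rw [← Real.log_div hA.ne' hB.ne']
      calc Real.log (A/B) ≤ A/B - 1 := Real.log_le_sub_one_of_pos (by positivity)
        _ = (A-B)/B := by field_simp
    have h2 : (A-B)/B ≤ e/d := div_le_div₀ he (by linarith) hd hdB
    linarith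

/-- x-side factors of the degenerate expansion. -/
def uFun (a : EuclideanSpace ℝ (Fin 2)) (L : ℝ) (n : ℕ) (pq : (ℕ×ℕ)×(ℕ×ℕ))
    (x : EuclideanSpace ℝ (Fin 2)) : ℝ :=
  if pq.2.1 = 0 then
    (if pq.2.2 = 0 then (-(1/(2*Real.pi))) * Real.log ‖x - sqctr a L n pq.1.1 pq.1.2‖ else 0)
  else
    (1/(2*Real.pi*pq.2.1)) *
      (if pq.2.2 = 0 then (((zc x - zc (sqctr a L n pq.1.1 pq.1.2))⁻¹)^pq.2.1).re
       else -((((zc x - zc (sqctr a L n pq.1.1 pq.1.2))⁻¹)^pq.2.1).im))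

/-- y-side factors of the degenerate expansion. -/
def vFun (a : EuclideanSpace ℝ (Fin 2)) (L : ℝ) (n : ℕ) (pq : (ℕ×ℕ)×(ℕ×ℕ))
    (y : EuclideanSpace ℝ (Fin 2)) : ℝ :=
  if pq.1 = (Jp a L n y, Jq a L n y) then
    (if pq.2.1 = 0 then (if pq.2.2 = 0 then 1 else 0)
     else (if pq.2.2 = 0 then ((zc y - zc (sqctr a L n pq.1.1 pq.1.2))^pq.2.1).re
           else ((zc y - zc (sqctr a L n pq.1.1 pq.1.2))^pq.2.1).im))
  else 0

lemma sum_uv (a : EuclideanSpace ℝ (Fin 2)) (L : ℝ) (n m : ℕ) (hn : 1 ≤ n)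
    (x y : EuclideanSpace ℝ (Fin 2)) :
    ∑ pq ∈ (Finset.range n ×ˢ Finset.range n) ×ˢ (Finset.range (m+1) ×ˢ Finset.range 2),
        uFun a L n pq x * vFun a L n pq y
    = (-(1/(2*Real.pi))) * Real.log ‖x - sqctr a L n (Jp a L n y) (Jq a L n y)‖
      + ∑ s ∈ Finset.range (m+1), (1/(2*Real.pi)) *
          ((((zc y - zc (sqctr a L n (Jp a L n y) (Jq a L n y)))
            / (zc x - zc (sqctr a L n (Jp a L n y) (Jq a L n y))))^s).re / s) := by
  set c := sqctr a L n (Jp a L n y) (Jq a L n y) with hc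
  set aC := zc x - zc c with haC
  set bC := zc y - zc c with hbC
  have hJmem : (Jp a L n y, Jq a L n y) ∈ Finset.range n ×ˢ Finset.range n := by
    rw [Finset.mem_product]
    constructor <;> rw [Finset.mem_range]
    · unfold Jp; omega
    · unfold Jq; omega
  rw [Finset.sum_product]
  have hinner : ∀ p ∈ Finset.range n ×ˢ Finset.range n,
      (∑ t ∈ Finset.range (m+1) ×ˢ Finset.range 2, uFun a L n (p,t) x * vFun a L n (p,t) y)
      = if p = (Jp a L n y, Jq a L n y) then
          (∑ t ∈ Finset.range (m+1) ×ˢ Finset.range 2,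
            uFun a L n ((Jp a L n y, Jq a L n y),t) x
              * vFun a L n ((Jp a L n y, Jq a L n y),t) y) else 0 := by
    intro p _
    split_ifs with h
    · subst h; rfl
    · apply Finset.sum_eq_zero
      intro t _
      have hv0 : vFun a L n (p,t) y = 0 := by
        unfold vFun
        exact if_neg h
      rw [hv0, mul_zero]
  rw [Finset.sum_congr rfl hinner, Finset.sum_ite_eq' (Finset.range n ×ˢ Finset.range n)
      (Jp a L n y, Jq a L n y), if_pos hJmem]
  rw [Finset.sum_product]
  have hrange2 : ∀ s ∈ Finset.range (m+1),
      (∑ e ∈ Finset.range 2, uFun a L n ((Jp a L n y, Jq a L n y),(s,e)) x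
          * vFun a L n ((Jp a L n y, Jq a L n y),(s,e)) y)
      = (if s = 0 then (-(1/(2*Real.pi))) * Real.log ‖x - c‖
         else (1/(2*Real.pi)) * (((bC/aC))^s).re / s) := by
    intro s _
    rw [Finset.sum_range_succ, Finset.sum_range_one]
    rcases Nat.eq_zero_or_pos s with rfl | hs
    · simp only [uFun, vFun, if_pos rfl]
      simp [hc]
    · have hs0 : s ≠ 0 := hs.ne'
      rw [if_neg hs0]
      simp only [uFun, vFun, if_pos rfl, if_neg hs0]
      simp only [if_pos rfl, (by norm_num : (1:ℕ) ≠ 0), if_neg (by norm_num : (1:ℕ) ≠ 0)]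
      simp only [if_true, if_false, ← hc, ← haC, ← hbC]
      have hsR : ((s:ℝ)) ≠ 0 := Nat.cast_ne_zero.mpr hs0
      have hπ : Real.pi ≠ 0 := Real.pi_ne_zero
      have hpow : ((bC/aC))^s = bC^s * (aC⁻¹)^s := by
        rw [div_eq_mul_inv, mul_pow]
      rw [hpow, Complex.mul_re]
      field_simp
      ring
  rw [Finset.sum_congr rfl hrange2]
  rw [Finset.sum_range_succ' _ m]
  rw [Finset.sum_range_succ' (fun s => (1/(2*Real.pi)) * ((((bC/aC))^s).re / s)) m]
  simp only [Nat.succ_ne_zero, if_false, if_pos rfl, Nat.cast_zero, div_zero, mul_zero,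
    add_zero, mul_div_assoc]
  exact add_comm _ _

end DKAaux

end AuxiliaryForDKA

set_option maxHeartbeats 2000000 in
open DKAaux in
/-- Degenerate (separable) approximation of the kernel `κ(x,y) = -(1/(2π)) log ‖x-y‖` of the
single layer operator in `ℝ²`, with exponential accuracy in `r^(1/2)`. The constant `C`
depends only on `η'`; the statement applies to every `η̃ > 0` with `η' ∈ (0, 2η̃)`. -/
theorem degenerate_kernel_approximation_2d
    (η' : ℝ) (hη'0 : 0 < η') :
    ∃ C : ℝ, 0 < C ∧
      ∀ (ηt : ℝ), 0 < ηt → η' < 2 * ηt →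
      ∀ (L : ℝ), 0 < L →
      ∀ (a : EuclideanSpace ℝ (Fin 2)) (DX : Set (EuclideanSpace ℝ (Fin 2))),
        (∀ x ∈ DX, ∀ y ∈ square2 a L, ηt * (Real.sqrt 2 * L) ≤ dist x y) →
        ∀ r : ℕ, 1 ≤ r →
          ∃ g₁ g₂ : Fin r → EuclideanSpace ℝ (Fin 2) → ℝ,
            ∀ x ∈ DX, ∀ y ∈ square2 a L,
              |(-(1 / (2 * Real.pi))) * Real.log ‖x - y‖ - ∑ i : Fin r, g₁ i x * g₂ i y| ≤
                C * (1 + 1 / ηt) * (1 + η') ^ (-((r : ℝ) ^ ((1 : ℝ) / 2))) := by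
  classical
  set n : ℕ := ⌈(2:ℝ)/η'⌉₊ + 1 with hn_def
  have hn1 : 1 ≤ n := by omega
  have hn2 : (2:ℝ)/η' ≤ n := by
    calc (2:ℝ)/η' ≤ (⌈(2:ℝ)/η'⌉₊ : ℝ) := Nat.le_ceil _
      _ ≤ n := by exact_mod_cast Nat.le_succ _
  have hnR : (0:ℝ) < n := by exact_mod_cast hn1
  have hn0 : (n:ℝ) ≠ 0 := hnR.ne'
  clear_value n
  set β : ℝ := Real.log (1+η') with hβ_def
  have hβ : 0 < β := Real.log_pos (by linarith)
  set CB : ℝ := 2 * Real.exp (β^2 * (2*(n:ℝ)^2) / Real.log 2) with hCB_def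
  have hCB : 0 < CB := by positivity
  set CA : ℝ := (1+η')^(3*n) with hCA_def
  have hCA : 0 < CA := by positivity
  refine ⟨CA + CB, by positivity, ?_⟩
  intro ηt hηt hη2 L hL a DX hdist r hr
  have hπ : (0:ℝ) < Real.pi := Real.pi_pos
  have h2π : (1:ℝ) ≤ 2 * Real.pi := by nlinarith [Real.pi_gt_three]
  have hs2 : (0:ℝ) < Real.sqrt 2 := Real.sqrt_pos.mpr (by norm_num)
  set d : ℝ := ηt * (Real.sqrt 2 * L) with hd_def
  have hd : 0 < d := by positivity
  have hηtn : 1/ηt ≤ (n:ℝ) := by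
    have h : 1/ηt < 2/η' := by
      rw [div_lt_div_iff₀ hηt hη'0]
      linarith
    linarith
  have hηinv : (0:ℝ) < 1 + 1/ηt := by positivity
  have hrpow : (1 + η') ^ (-((r : ℝ) ^ ((1 : ℝ) / 2))) = Real.exp (-(β * Real.sqrt r)) := by
    rw [← Real.sqrt_eq_rpow, Real.rpow_def_of_pos (by linarith : (0:ℝ) < 1+η')]
    rw [hβ_def]
    ring_nf
  have hdistn : ∀ x ∈ DX, ∀ y ∈ square2 a L, d ≤ ‖x - y‖ := by
    intro x hx y hy
    rw [← dist_eq_norm]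
    exact hdist x hx y hy
  have hexp_pos := Real.exp_pos (-(β * Real.sqrt r))
  by_cases hrc : r < 8*n^2
  · -- small r : rank-one approximation by the kernel at the center of the square
    set c : EuclideanSpace ℝ (Fin 2) := sqctr a L 1 0 0 with hcdef
    have hcmem : c ∈ square2 a L := sqctr_mem a hL le_rfl le_rfl le_rfl
    obtain ⟨g₁, g₂, hg⟩ := exists_separable ({0} : Finset ℕ) r (by simpa using hr)
      (fun _ x => (-(1/(2*Real.pi))) * Real.log ‖x - c‖) (fun _ _ => 1)
    refine ⟨g₁, g₂, ?_⟩
    intro x hx y hy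
    rw [hg x y, Finset.sum_singleton, mul_one]
    -- center of the full square equals the `n = 1` subdivision center
    have hJ1p : Jp a L 1 y = 0 := by unfold Jp; omega
    have hJ1q : Jq a L 1 y = 0 := by unfold Jq; omega
    have hyc : ‖y - c‖ ≤ Real.sqrt 2 * (L/2) := by
      have h := near_center a hL le_rfl hy
      rw [hJ1p, hJ1q] at h
      calc ‖y - c‖ ≤ Real.sqrt 2 * (L/(2*(1:ℕ))) := h
        _ = Real.sqrt 2 * (L/2) := by norm_num
    have hA := hdistn x hx y hy
    have hB : d ≤ ‖x - c‖ := hdistn x hx c hcmem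
    have hAB : |‖x - y‖ - ‖x - c‖| ≤ Real.sqrt 2 * (L/2) := by
      calc |‖x - y‖ - ‖x - c‖| ≤ ‖(x-y) - (x-c)‖ := abs_norm_sub_norm_le _ _
        _ = ‖y - c‖ := by rw [show (x-y)-(x-c) = -(y-c) by abel, norm_neg]
        _ ≤ _ := hyc
    have hlog := log_ratio hA hB hd hAB
    have hratio : (Real.sqrt 2 * (L/2)) / d = 1/(2*ηt) := by
      rw [hd_def]
      field_simp
    rw [hratio] at hlog
    have herr : |(-(1 / (2 * Real.pi))) * Real.log ‖x - y‖
        - (-(1/(2*Real.pi))) * Real.log ‖x - c‖| ≤ 1 + 1/ηt := by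
      rw [show (-(1 / (2 * Real.pi))) * Real.log ‖x - y‖
          - (-(1/(2*Real.pi))) * Real.log ‖x - c‖
          = (-(1/(2*Real.pi))) * (Real.log ‖x - y‖ - Real.log ‖x - c‖) by ring]
      rw [abs_mul, abs_neg, abs_of_pos (by positivity : (0:ℝ) < 1/(2*Real.pi))]
      have h1 : 1/(2*Real.pi) ≤ 1 := by
        rw [div_le_one (by positivity)]; linarith
      have h1ηt : (0:ℝ) ≤ 1/ηt := by positivity
      calc (1/(2*Real.pi)) * |Real.log ‖x-y‖ - Real.log ‖x-c‖|
          ≤ 1 * (1/(2*ηt)) := mul_le_mul h1 hlog (abs_nonneg _) (by norm_num)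
        _ ≤ 1 + 1/ηt := by
            rw [one_mul, show 1/(2*ηt) = (1/2)*(1/ηt) by field_simp]
            linarith
    have hCge : Real.exp (β * Real.sqrt r) ≤ CA := by
      have h8 : (r:ℝ) ≤ 8*(n:ℝ)^2 := by exact_mod_cast hrc.le
      have hsr : Real.sqrt r ≤ 3*n := by
        calc Real.sqrt r ≤ Real.sqrt (9*(n:ℝ)^2) := Real.sqrt_le_sqrt (by linarith)
          _ = 3*n := by
              rw [show (9:ℝ)*(n:ℝ)^2 = (3*(n:ℝ))^2 by ring, Real.sqrt_sq (by positivity)]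
      calc Real.exp (β * Real.sqrt r) ≤ Real.exp (β * (3*(n:ℝ))) :=
            Real.exp_le_exp.mpr (by nlinarith)
        _ = (1+η')^(3*n) := by
            rw [show β * (3*(n:ℝ)) = ((3*n : ℕ):ℝ) * β by push_cast; ring,
              Real.exp_nat_mul, hβ_def, Real.exp_log (by linarith)]
        _ = CA := rfl
    have h1C : (1:ℝ) ≤ (CA + CB) * Real.exp (-(β * Real.sqrt r)) := by
      rw [Real.exp_neg, mul_comm, inv_mul_eq_div, le_div_iff₀ (Real.exp_pos _), one_mul]
      calc Real.exp (β * Real.sqrt r) ≤ CA := hCge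
        _ ≤ CA + CB := by linarith
    calc |(-(1 / (2 * Real.pi))) * Real.log ‖x - y‖
          - (-(1/(2*Real.pi))) * Real.log ‖x - c‖| ≤ 1 + 1/ηt := herr
      _ = (1 + 1/ηt) * 1 := by ring
      _ ≤ (1 + 1/ηt) * ((CA+CB) * Real.exp (-(β * Real.sqrt r))) :=
          mul_le_mul_of_nonneg_left h1C hηinv.le
      _ = (CA+CB) * (1 + 1/ηt) * ((1 + η') ^ (-((r : ℝ) ^ ((1 : ℝ) / 2)))) := by
          rw [hrpow]; ring
  · -- large r : multipole expansion on an n × n subdivision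
    push_neg at hrc
    set m : ℕ := r / (8*n^2) with hm_def
    have h8n : 0 < 8*n^2 := Nat.mul_pos (by norm_num) (pow_pos hn1 2)
    have hm1 : 1 ≤ m := by rw [hm_def]; exact (Nat.one_le_div_iff h8n).mpr hrc
    clear_value m
    have hcard : ((Finset.range n ×ˢ Finset.range n) ×ˢ
        (Finset.range (m+1) ×ˢ Finset.range 2)).card ≤ r := by
      rw [Finset.card_product, Finset.card_product, Finset.card_product]
      simp only [Finset.card_range]
      have hdm : m * (8*n^2) ≤ r := by rw [hm_def]; exact Nat.div_mul_le_self r (8*n^2)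
      calc n*n*((m+1)*2) ≤ n*n*(2*m*2) := by
            apply Nat.mul_le_mul_left
            omega
        _ = m*(4*(n*n)) := by ring
        _ ≤ m*(8*n^2) := by
            apply Nat.mul_le_mul_left
            have : n*n = n^2 := (sq n).symm
            omega
        _ ≤ r := hdm
    have hmR : (r:ℝ)/(8*(n:ℝ)^2) - 1 ≤ (m:ℝ) := by
      have hmod : 8*n^2 * m + r % (8*n^2) = r := by
        rw [hm_def]; exact Nat.div_add_mod r (8*n^2)
      have hlt : r % (8*n^2) < 8*n^2 := Nat.mod_lt _ h8n
      have hcast : (r:ℝ) < 8*(n:ℝ)^2 * (m:ℝ) + 8*(n:ℝ)^2 := by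
        have h2 : ((8*n^2 * m + r % (8*n^2) : ℕ) : ℝ) = (r:ℝ) := by
          exact_mod_cast congrArg (Nat.cast : ℕ → ℝ) hmod
        have h3 : ((r % (8*n^2) : ℕ) : ℝ) < ((8*n^2 : ℕ) : ℝ) := by exact_mod_cast hlt
        push_cast at h2 h3
        nlinarith [h2, h3]
      rw [sub_le_iff_le_add, div_le_iff₀ (by nlinarith [hnR] : (0:ℝ) < 8*(n:ℝ)^2)]
      nlinarith [hcast]
    obtain ⟨g₁, g₂, hg⟩ := exists_separable _ r hcard (uFun a L n) (vFun a L n)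
    refine ⟨g₁, g₂, ?_⟩
    intro x hx y hy
    rw [hg x y, sum_uv a L n m hn1 x y]
    set c := sqctr a L n (Jp a L n y) (Jq a L n y) with hcdef
    set aC := zc x - zc c with haC
    set bC := zc y - zc c with hbC
    have hcmem : c ∈ square2 a L :=
      sqctr_mem a hL hn1 (min_le_left _ _) (min_le_left _ _)
    have habs_a : ‖aC‖ = ‖x - c‖ := by rw [haC, ← zc_sub, zc_abs]
    have habs_b : ‖bC‖ = ‖y - c‖ := by rw [hbC, ← zc_sub, zc_abs]
    have habs_ab : ‖aC - bC‖ = ‖x - y‖ := by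
      rw [show aC - bC = zc x - zc y by rw [haC, hbC]; ring, ← zc_sub, zc_abs]
    have hB : d ≤ ‖x - c‖ := hdistn x hx c hcmem
    have haC0 : aC ≠ 0 := by
      intro h
      rw [h, norm_zero] at habs_a
      linarith [hB, habs_a.symm ▸ hB]
    have hbhalf : ‖bC‖ ≤ ‖aC‖ / 2 := by
      rw [habs_a, habs_b]
      have hnear := near_center a hL hn1 hy
      rw [← hcdef] at hnear
      have h1n : (1:ℝ) ≤ ηt * n := by
        rw [div_le_iff₀ hηt] at hηtn
        nlinarith [hηtn]
      have hstep : Real.sqrt 2 * (L/(2*(n:ℝ))) ≤ d/2 := by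
        have e1 : Real.sqrt 2 * (L/(2*(n:ℝ))) = (Real.sqrt 2 * L)/2 * (1/(n:ℝ)) := by
          field_simp
        have e2 : d/2 = (Real.sqrt 2 * L)/2 * ηt := by rw [hd_def]; ring
        rw [e1, e2]
        apply mul_le_mul_of_nonneg_left _ (by positivity)
        rw [div_le_iff₀ hnR]
        nlinarith [h1n]
      calc ‖y - c‖ ≤ Real.sqrt 2 * (L/(2*(n:ℝ))) := hnear
        _ ≤ d/2 := hstep
        _ ≤ ‖x - c‖/2 := by linarith
    have hcore := core_bound m aC bC haC0 hbhalf
    rw [habs_a, habs_ab] at hcore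
    have hrewrite : (-(1 / (2 * Real.pi))) * Real.log ‖x - y‖
        - ((-(1/(2*Real.pi))) * Real.log ‖x - c‖
          + ∑ s ∈ Finset.range (m+1), (1/(2*Real.pi)) * (((bC/aC)^s).re / s))
        = (-(1/(2*Real.pi))) * (Real.log ‖x - y‖ - Real.log ‖x - c‖
            + ∑ s ∈ Finset.range (m+1), ((bC/aC)^s).re / s) := by
      rw [← Finset.mul_sum]
      ring
    rw [hrewrite, abs_mul, abs_neg, abs_of_pos (by positivity : (0:ℝ) < 1/(2*Real.pi))]
    have hCBle : CB ≤ (CA+CB)*(1+1/ηt) := by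
      have h1ηt : (0:ℝ) ≤ 1/ηt := by positivity
      nlinarith
    calc (1/(2*Real.pi)) * |Real.log ‖x - y‖ - Real.log ‖x - c‖
            + ∑ s ∈ Finset.range (m+1), ((bC/aC)^s).re / s|
        ≤ 1 * ((1:ℝ)/2)^m := by
          apply mul_le_mul _ hcore (abs_nonneg _) (by norm_num)
          rw [div_le_one (by positivity)]; linarith
      _ = ((1:ℝ)/2)^m := one_mul _
      _ ≤ CB * Real.exp (-(β * Real.sqrt r)) := by
          have := key_exp β hβ n hn1 r m hmR
          rw [hCB_def]
          linarith [this]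
      _ ≤ (CA+CB) * (1+1/ηt) * Real.exp (-(β * Real.sqrt r)) :=
          mul_le_mul_of_nonneg_right hCBle hexp_pos.le
      _ = (CA+CB) * (1 + 1/ηt) * ((1 + η') ^ (-((r : ℝ) ^ ((1 : ℝ) / 2)))) := by
          rw [hrpow]
end

section
/- (Hierarchical relation of Schur complements.) Let ρ, τ₁, τ₂ be finite index types and let A be a real symmetric positive definite matrix indexed by ρ ⊕ τ₁ ⊕ τ₂, with blocks A_{ab} for a, b ∈ {ρ, τ₁, τ₂}. Then the principal blocks A_{ρρ} and the block over ρ ⊕ τ₁ are invertible; defining the Schur complements with respect to ρ by S(τ_i, τ_j) := A_{τ_i τ_j} − A_{τ_i ρ}·A_{ρρ}^{−1}·A_{ρ τ_j} for i, j ∈ {1,2}, and the Schur complement with respect to ρ ⊕ τ₁ by S'(τ₂, τ₂) := A_{τ₂τ₂} − A_{τ₂, ρ⊕τ₁}·(A_{ρ⊕τ₁, ρ⊕τ₁})^{−1}·A_{ρ⊕τ₁, τ₂}, the matrix S(τ₁, τ₁) is invertible and the Schur complement of A over τ₁ ⊕ τ₂ with respect to ρ satisfies the block identity S(τ, τ)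 = [[S(τ₁,τ₁), S(τ₁,τ₂)], [S(τ₂,τ₁), S'(τ₂,τ₂) + S(τ₂,τ₁)·S(τ₁,τ₁)^{−1}·S(τ₁,τ₂)]], where S(τ,τ) denotes the matrix over τ₁ ⊕ τ₂ given by [[A_{τ₁τ₁},A_{τ₁τ₂}],[A_{τ₂τ₁},A_{τ₂τ₂}]] − [A_{τ₁ρ};A_{τ₂ρ}]·A_{ρρ}^{−1}·[A_{ρτ₁}, A_{ρτ₂}]. In particular, S'(τ₂, τ₂) = S(τ₂, τ₂) − S(τ₂, τ₁)·S(τ₁, τ₁)^{−1}·S(τ₁, τ₂). -/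
open Matrix


lemma posDef_submatrix_of_injective' {m n : Type*} [Fintype m] [Fintype n] [DecidableEq m]
    [DecidableEq n] {M : Matrix n n ℝ} (hM : M.PosDef) {e : m → n}
    (he : Function.Injective e) : (M.submatrix e e).PosDef := by
  rw [posDef_iff_dotProduct_mulVec] at hM ⊢
  constructor
  · have h1 := hM.1
    unfold IsHermitian at h1 ⊢
    rw [conjTranspose_submatrix, h1]
  · intro x hx
    set E : Matrix n m ℝ := (1 : Matrix n n ℝ).submatrix id e with hE
    have hEx : E *ᵥ x ≠ 0 := by
      obtain ⟨i₀, hi₀⟩ := Function.ne_iff.mp hx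
      intro h
      apply hi₀
      have := congrFun h (e i₀)
      simp only [mulVec, dotProduct, hE, submatrix_apply, id_eq, one_apply, Pi.zero_apply] at this
      rwa [Finset.sum_eq_single i₀ (fun b _ hb => by
        rw [if_neg (fun hc => hb (he hc.symm)), zero_mul])
        (fun h => absurd (Finset.mem_univ i₀) h), if_pos rfl, one_mul] at this
    have hsub : M.submatrix e e = Eᴴ * M * E := by
      have hET : Eᴴ = (1 : Matrix n n ℝ).submatrix e id := by
        rw [hE, conjTranspose_submatrix, conjTranspose_one]
      have k1 : Eᴴ * M = M.submatrix e id := by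
        rw [hET]
        simpa using (submatrix_mul (1 : Matrix n n ℝ) M e id id Function.bijective_id).symm
      have k2 : M.submatrix e id * E = M.submatrix e e := by
        rw [hE]
        simpa using (submatrix_mul M (1 : Matrix n n ℝ) e id e Function.bijective_id).symm
      rw [k1, k2]
    rw [hsub]
    simpa only [star_mulVec, dotProduct_mulVec, vecMul_vecMul, mulVec_mulVec, conjTranspose_conjTranspose, Matrix.mul_assoc]
      using hM.2 (x := E *ᵥ x) hEx

lemma schur_quotient' {ρ τ₁ τ₂ : Type*} [Fintype ρ] [Fintype τ₁] [Fintype τ₂]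
    [DecidableEq ρ] [DecidableEq τ₁]
    (P : Matrix ρ ρ ℝ) (B₁ : Matrix ρ τ₁ ℝ) (B₂ : Matrix ρ τ₂ ℝ)
    (C₁ : Matrix τ₁ ρ ℝ) (C₂ : Matrix τ₂ ρ ℝ) (D₁₁ : Matrix τ₁ τ₁ ℝ) (D₁₂ : Matrix τ₁ τ₂ ℝ)
    (D₂₁ : Matrix τ₂ τ₁ ℝ) (D₂₂ : Matrix τ₂ τ₂ ℝ)
    [Invertible P] [Invertible (D₁₁ - C₁ * P⁻¹ * B₁)] :
    D₂₂ - fromCols C₂ D₂₁ * (fromBlocks P B₁ C₁ D₁₁)⁻¹ * fromRows B₂ D₁₂ =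
      (D₂₂ - C₂ * P⁻¹ * B₂) -
        (D₂₁ - C₂ * P⁻¹ * B₁) * (D₁₁ - C₁ * P⁻¹ * B₁)⁻¹ * (D₁₂ - C₁ * P⁻¹ * B₂) := by
  have hP : ⅟P = P⁻¹ := invOf_eq_nonsing_inv P
  haveI hS : Invertible (D₁₁ - C₁ * ⅟P * B₁) := by rw [hP]; infer_instance
  haveI := fromBlocks₁₁Invertible P B₁ C₁ D₁₁
  have hinv : (fromBlocks P B₁ C₁ D₁₁)⁻¹ =
      fromBlocks (P⁻¹ + P⁻¹ * B₁ * (D₁₁ - C₁ * P⁻¹ * B₁)⁻¹ * C₁ * P⁻¹)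
        (-(P⁻¹ * B₁ * (D₁₁ - C₁ * P⁻¹ * B₁)⁻¹))
        (-((D₁₁ - C₁ * P⁻¹ * B₁)⁻¹ * C₁ * P⁻¹)) ((D₁₁ - C₁ * P⁻¹ * B₁)⁻¹) := by
    rw [← invOf_eq_nonsing_inv, invOf_fromBlocks₁₁_eq]
    simp_rw [invOf_eq_nonsing_inv]
  rw [hinv, fromCols_mul_fromBlocks, fromCols_mul_fromRows]
  simp only [Matrix.mul_add, Matrix.add_mul, Matrix.mul_sub, Matrix.sub_mul,
    Matrix.mul_neg, Matrix.neg_mul, Matrix.mul_assoc]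
  abel

variable {ρ τ₁ τ₂ : Type*}

noncomputable def schurBlock {a b : Type*} [Fintype ρ] [DecidableEq ρ]
    (A : Matrix (ρ ⊕ τ₁ ⊕ τ₂) (ρ ⊕ τ₁ ⊕ τ₂) ℝ)
    (f : a → ρ ⊕ τ₁ ⊕ τ₂) (g : b → ρ ⊕ τ₁ ⊕ τ₂) : Matrix a b ℝ :=
  A.submatrix f g -
    A.submatrix f Sum.inl * (A.submatrix Sum.inl Sum.inl)⁻¹ * A.submatrix Sum.inl g

/-- Hierarchical relation of Schur complements for a symmetric positive definite matrix
indexed by `ρ ⊕ τ₁ ⊕ τ₂`. -/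
theorem schur_hierarchical_relation
    [Fintype ρ] [Fintype τ₁] [Fintype τ₂] [DecidableEq ρ] [DecidableEq τ₁] [DecidableEq τ₂]
    (A : Matrix (ρ ⊕ τ₁ ⊕ τ₂) (ρ ⊕ τ₁ ⊕ τ₂) ℝ) (hA : A.PosDef) :
    IsUnit (A.submatrix (Sum.inl : ρ → ρ ⊕ τ₁ ⊕ τ₂) Sum.inl) ∧
    IsUnit (A.submatrix
      (Sum.elim Sum.inl (fun i => Sum.inr (Sum.inl i)) : ρ ⊕ τ₁ → ρ ⊕ τ₁ ⊕ τ₂)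
      (Sum.elim Sum.inl (fun i => Sum.inr (Sum.inl i)))) ∧
    IsUnit (schurBlock A (fun i : τ₁ => Sum.inr (Sum.inl i)) (fun i : τ₁ => Sum.inr (Sum.inl i))) ∧
    schurBlock A (Sum.inr : τ₁ ⊕ τ₂ → ρ ⊕ τ₁ ⊕ τ₂) Sum.inr =
      Matrix.fromBlocks
        (schurBlock A (fun i : τ₁ => Sum.inr (Sum.inl i)) (fun i : τ₁ => Sum.inr (Sum.inl i)))
        (schurBlock A (fun i : τ₁ => Sum.inr (Sum.inl i)) (fun i : τ₂ => Sum.inr (Sum.inr i)))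
        (schurBlock A (fun i : τ₂ => Sum.inr (Sum.inr i)) (fun i : τ₁ => Sum.inr (Sum.inl i)))
        ((A.submatrix (fun i : τ₂ => Sum.inr (Sum.inr i)) (fun i : τ₂ => Sum.inr (Sum.inr i)) -
            A.submatrix (fun i : τ₂ => Sum.inr (Sum.inr i))
                (Sum.elim Sum.inl (fun i => Sum.inr (Sum.inl i))) *
              (A.submatrix (Sum.elim Sum.inl (fun i => Sum.inr (Sum.inl i)) : ρ ⊕ τ₁ → ρ ⊕ τ₁ ⊕ τ₂)
                  (Sum.elim Sum.inl (fun i => Sum.inr (Sum.inl i))))⁻¹ *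
              A.submatrix (Sum.elim Sum.inl (fun i => Sum.inr (Sum.inl i)))
                (fun i : τ₂ => Sum.inr (Sum.inr i))) +
          schurBlock A (fun i : τ₂ => Sum.inr (Sum.inr i)) (fun i : τ₁ => Sum.inr (Sum.inl i)) *
            (schurBlock A (fun i : τ₁ => Sum.inr (Sum.inl i)) (fun i : τ₁ => Sum.inr (Sum.inl i)))⁻¹ *
            schurBlock A (fun i : τ₁ => Sum.inr (Sum.inl i)) (fun i : τ₂ => Sum.inr (Sum.inr i))) ∧
    (A.submatrix (fun i : τ₂ => Sum.inr (Sum.inr i)) (fun i : τ₂ => Sum.inr (Sum.inr i)) -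
        A.submatrix (fun i : τ₂ => Sum.inr (Sum.inr i))
            (Sum.elim Sum.inl (fun i => Sum.inr (Sum.inl i))) *
          (A.submatrix (Sum.elim Sum.inl (fun i => Sum.inr (Sum.inl i)) : ρ ⊕ τ₁ → ρ ⊕ τ₁ ⊕ τ₂)
              (Sum.elim Sum.inl (fun i => Sum.inr (Sum.inl i))))⁻¹ *
          A.submatrix (Sum.elim Sum.inl (fun i => Sum.inr (Sum.inl i)))
            (fun i : τ₂ => Sum.inr (Sum.inr i))) =
      schurBlock A (fun i : τ₂ => Sum.inr (Sum.inr i)) (fun i : τ₂ => Sum.inr (Sum.inr i)) -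
        schurBlock A (fun i : τ₂ => Sum.inr (Sum.inr i)) (fun i : τ₁ => Sum.inr (Sum.inl i)) *
          (schurBlock A (fun i : τ₁ => Sum.inr (Sum.inl i)) (fun i : τ₁ => Sum.inr (Sum.inl i)))⁻¹ *
          schurBlock A (fun i : τ₁ => Sum.inr (Sum.inl i)) (fun i : τ₂ => Sum.inr (Sum.inr i)) := by
  set r₁ : τ₁ → ρ ⊕ τ₁ ⊕ τ₂ := fun i => Sum.inr (Sum.inl i) with hr₁
  set r₂ : τ₂ → ρ ⊕ τ₁ ⊕ τ₂ := fun i => Sum.inr (Sum.inr i) with hr₂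
  set f : ρ ⊕ τ₁ → ρ ⊕ τ₁ ⊕ τ₂ := Sum.elim Sum.inl (fun i => Sum.inr (Sum.inl i)) with hfdef
  -- blocks
  set P := A.submatrix (Sum.inl : ρ → ρ ⊕ τ₁ ⊕ τ₂) Sum.inl with hPdef
  have hP : P.PosDef := posDef_submatrix_of_injective' hA Sum.inl_injective
  have hPu : IsUnit P := hP.isUnit
  haveI : Invertible P := hPu.invertible
  have hf : Function.Injective f := by
    rw [hfdef]
    rintro (a | a) (b | b) h <;> simp only [Sum.elim_inl, Sum.elim_inr] at h <;> simp_all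
  have hMpd : (A.submatrix f f).PosDef := posDef_submatrix_of_injective' hA hf
  have hMu : IsUnit (A.submatrix f f) := hMpd.isUnit
  have hMb : A.submatrix f f =
      fromBlocks P (A.submatrix Sum.inl r₁) (A.submatrix r₁ Sum.inl) (A.submatrix r₁ r₁) := by
    ext (i | i) (j | j) <;> rfl
  -- S₁₁ is a unit
  have hS11 : schurBlock A r₁ r₁ =
      A.submatrix r₁ r₁ - A.submatrix r₁ Sum.inl * P⁻¹ * A.submatrix Sum.inl r₁ := rfl
  have hdet : (A.submatrix f f).det = P.det * (schurBlock A r₁ r₁).det := by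
    rw [hMb, det_fromBlocks₁₁, hS11, invOf_eq_nonsing_inv]
  have hS11u : IsUnit (schurBlock A r₁ r₁) := by
    rw [Matrix.isUnit_iff_isUnit_det] at hMu ⊢
    rw [hdet] at hMu
    exact (IsUnit.mul_iff.mp hMu).2
  haveI : Invertible (A.submatrix r₁ r₁ - A.submatrix r₁ Sum.inl * P⁻¹ * A.submatrix Sum.inl r₁) :=
    (hS11 ▸ hS11u).invertible
  -- row / column decompositions
  have hrow : A.submatrix r₂ f = fromCols (A.submatrix r₂ Sum.inl) (A.submatrix r₂ r₁) := by
    ext i (j | j) <;> rfl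
  have hcol : A.submatrix f r₂ = fromRows (A.submatrix Sum.inl r₂) (A.submatrix r₁ r₂) := by
    ext (i | i) j <;> rfl
  -- the quotient identity (fifth conjunct)
  have h5 : (A.submatrix r₂ r₂ - A.submatrix r₂ f * (A.submatrix f f)⁻¹ * A.submatrix f r₂) =
      schurBlock A r₂ r₂ -
        schurBlock A r₂ r₁ * (schurBlock A r₁ r₁)⁻¹ * schurBlock A r₁ r₂ := by
    rw [hrow, hcol, hMb]
    exact schur_quotient' P (A.submatrix Sum.inl r₁) (A.submatrix Sum.inl r₂)
      (A.submatrix r₁ Sum.inl) (A.submatrix r₂ Sum.inl) (A.submatrix r₁ r₁)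
      (A.submatrix r₁ r₂) (A.submatrix r₂ r₁) (A.submatrix r₂ r₂)
  -- block decomposition of the big Schur complement (fourth conjunct)
  have hblocks : schurBlock A (Sum.inr : τ₁ ⊕ τ₂ → ρ ⊕ τ₁ ⊕ τ₂) Sum.inr =
      fromBlocks (schurBlock A r₁ r₁) (schurBlock A r₁ r₂)
        (schurBlock A r₂ r₁) (schurBlock A r₂ r₂) := by
    ext (i | i) (j | j) <;>
      simp [schurBlock, Matrix.mul_apply, Matrix.sub_apply, Matrix.fromBlocks,
        Matrix.submatrix_apply, hr₁, hr₂]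
  refine ⟨hPu, hMu, hS11u, ?_, h5⟩
  rw [hblocks, h5, sub_add_cancel]
end

section
/- (Stabilized versus unstabilized Schur complements differ by rank 2.) Let I be a finite index set, W a real I × I matrix, B : I → ℝ a vector, and α ∈ ℝ; set W^st := W + α·B·Bᵀ (the matrix with entries W_{ij} + α·B_i·B_j). Let ρ, τ, σ be subsets of I and assume that both W|_{ρ×ρ} and W^st|_{ρ×ρ} are invertible. Then the matrix D := W^st|_{τ×ρ}·(W^st|_{ρ×ρ})^{−1}·W^st|_{ρ×σ} − W|_{τ×ρ}·(W|_{ρ×ρ})^{−1}·W^st|_{ρ×σ} has rank at most 2. Equivalently, the Schur complement S(τ,σ) := W^st|_{τ×σ} − W^st|_{τ×ρ}·(W^st|_{ρ×ρ})^{−1}·W^st|_{ρ×σ} differs from W^st|_{τ×σ} − W|_{τ×ρ}·(W|_{ρ×ρ})^{−1}·W^st|_{ρ×σ} by a matrix of rank at most 2. -/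
open Matrix

lemma aux_mul_vecMulVec {m n p : Type*} [Fintype n] {R : Type*} [CommRing R]
    (M : Matrix m n R) (v : n → R) (w : p → R) :
    M * vecMulVec v w = vecMulVec (M *ᵥ v) w := by
  ext i j
  simp only [mul_apply, vecMulVec_apply, mulVec, dotProduct, Finset.sum_mul]
  exact Finset.sum_congr rfl fun x _ => by ring

lemma aux_vecMulVec_mul {m n p : Type*} [Fintype n] {R : Type*} [CommRing R]
    (u : m → R) (v : n → R) (M : Matrix n p R) :
    vecMulVec u v * M = vecMulVec u (v ᵥ* M) := by
  ext i j
  simp only [mul_apply, vecMulVec_apply, vecMul, dotProduct, Finset.mul_sum]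
  exact Finset.sum_congr rfl fun x _ => by ring

lemma rank_vecMulVec_le {m n : Type*} [Fintype n] [Fintype m] [DecidableEq n]
    (u : m → ℝ) (v : n → ℝ) : (vecMulVec u v).rank ≤ 1 := by
  rw [vecMulVec_eq Unit u v]
  calc (replicateCol Unit u * replicateRow Unit v).rank ≤ (replicateRow Unit v).rank := rank_mul_le_right _ _
    _ ≤ Fintype.card Unit := rank_le_card_height _
    _ = 1 := Fintype.card_unit

/-- Stabilized versus unstabilized Schur complements differ by a matrix of rank at most 2. -/
theorem stabilized_schur_rank_two {I : Type*} [Fintype I] [DecidableEq I]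
    (W : Matrix I I ℝ) (B : I → ℝ) (α : ℝ) (ρ τ σ : Finset I)
    (hW : IsUnit (W.submatrix (fun i : ↥ρ => (i : I)) (fun i : ↥ρ => (i : I))))
    (hWst : IsUnit ((W + α • Matrix.vecMulVec B B).submatrix
      (fun i : ↥ρ => (i : I)) (fun i : ↥ρ => (i : I)))) :
    Matrix.rank
      ((W + α • Matrix.vecMulVec B B).submatrix (fun i : ↥τ => (i : I)) (fun i : ↥ρ => (i : I)) *
          ((W + α • Matrix.vecMulVec B B).submatrix
              (fun i : ↥ρ => (i : I)) (fun i : ↥ρ => (i : I)))⁻¹ *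
          (W + α • Matrix.vecMulVec B B).submatrix
            (fun i : ↥ρ => (i : I)) (fun i : ↥σ => (i : I)) -
        W.submatrix (fun i : ↥τ => (i : I)) (fun i : ↥ρ => (i : I)) *
          (W.submatrix (fun i : ↥ρ => (i : I)) (fun i : ↥ρ => (i : I)))⁻¹ *
          (W + α • Matrix.vecMulVec B B).submatrix
            (fun i : ↥ρ => (i : I)) (fun i : ↥σ => (i : I))) ≤ 2 := by
  set fρ : ↥ρ → I := fun i => (i : I)
  set fτ : ↥τ → I := fun i => (i : I)
  set fσ : ↥σ → I := fun i => (i : I)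
  set A := W.submatrix fτ fρ with hA
  set P := W.submatrix fρ fρ with hP
  set X := (W + α • Matrix.vecMulVec B B).submatrix fρ fσ with hX
  set Q := (W + α • Matrix.vecMulVec B B).submatrix fρ fρ with hQ
  set A' := (W + α • Matrix.vecMulVec B B).submatrix fτ fρ with hA'
  have hQP : Q = P + α • vecMulVec (B ∘ fρ) (B ∘ fρ) := by
    ext i j; simp [hQ, hP, vecMulVec_apply]
  have hAA : A' = A + α • vecMulVec (B ∘ fτ) (B ∘ fρ) := by
    ext i j; simp [hA', hA, vecMulVec_apply]
  have hPdet : IsUnit P.det := (isUnit_iff_isUnit_det P).mp hW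
  have hQdet : IsUnit Q.det := (isUnit_iff_isUnit_det Q).mp hWst
  -- key identity
  have key : A' * Q⁻¹ - A * P⁻¹
      = vecMulVec (α • (B ∘ fτ - A *ᵥ (P⁻¹ *ᵥ B ∘ fρ))) ((B ∘ fρ) ᵥ* Q⁻¹) := by
    have h1 : (A' * Q⁻¹ - A * P⁻¹) * Q
        = vecMulVec (α • (B ∘ fτ - A *ᵥ (P⁻¹ *ᵥ B ∘ fρ))) ((B ∘ fρ) ᵥ* Q⁻¹) * Q := by
      rw [Matrix.sub_mul, Matrix.mul_assoc, Matrix.nonsing_inv_mul Q hQdet, Matrix.mul_one,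
        aux_vecMulVec_mul, vecMul_vecMul, Matrix.nonsing_inv_mul Q hQdet, vecMul_one,
        hQP, hAA]
      rw [Matrix.mul_add]
      have h2 : A * P⁻¹ * P = A := Matrix.nonsing_inv_mul_cancel_right P A hPdet
      rw [h2]
      ext i j
      simp [vecMulVec_apply, Matrix.mul_apply, mulVec, dotProduct, Finset.sum_mul,
        Finset.mul_sum, mul_comm, mul_assoc, mul_left_comm, sub_mul, mul_sub]
    calc A' * Q⁻¹ - A * P⁻¹ = (A' * Q⁻¹ - A * P⁻¹) * Q * Q⁻¹ :=
          (Matrix.mul_nonsing_inv_cancel_right Q _ hQdet).symm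
      _ = vecMulVec (α • (B ∘ fτ - A *ᵥ (P⁻¹ *ᵥ B ∘ fρ))) ((B ∘ fρ) ᵥ* Q⁻¹) * Q * Q⁻¹ := by
          rw [h1]
      _ = _ := Matrix.mul_nonsing_inv_cancel_right Q _ hQdet
  have hD : A' * Q⁻¹ * X - A * P⁻¹ * X = (A' * Q⁻¹ - A * P⁻¹) * X :=
    (Matrix.sub_mul _ _ _).symm
  rw [hD, key, aux_vecMulVec_mul]
  calc (vecMulVec (α • (B ∘ fτ - A *ᵥ (P⁻¹ *ᵥ B ∘ fρ))) ((B ∘ fρ) ᵥ* Q⁻¹ ᵥ* X)).rank ≤ 1 :=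
        _root_.rank_vecMulVec_le _ _
    _ ≤ 2 := by norm_num
end

section
/- (Inverse of the stabilized matrix from the saddle-point inverse.) Let N be a finite index set, W a real N × N matrix, B a real N × 1 matrix (column vector), and α ∈ ℝ. Suppose the saddle-point matrix 𝒲 := [[W, B],[Bᵀ, 0]] (a square matrix of size |N|+1) is invertible, and write its inverse in blocks as 𝒲^{−1} = [[G, P],[Q, z]] with G of size N × N, P of size N × 1, Q of size 1 × N, and z of size 1 × 1. If the stabilized matrix W^st := W + α·B·Bᵀ is invertible, then (W^st)^{−1} = G + (W^st)^{−1}·B·Q. -/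
open Matrix

/-- Inverse of the stabilized matrix from the saddle-point inverse: if
`𝒲 = [[W, B],[Bᵀ, 0]]` is invertible with inverse `[[G, P],[Q, z]]` and the stabilized
matrix `W^st = W + α B Bᵀ` is invertible, then `(W^st)⁻¹ = G + (W^st)⁻¹ B Q`. -/
theorem stabilized_inverse_from_saddle_point {N : Type*} [Fintype N] [DecidableEq N]
    (W : Matrix N N ℝ) (B : Matrix N Unit ℝ) (α : ℝ)
    (h𝒲 : IsUnit (Matrix.fromBlocks W B Bᵀ (0 : Matrix Unit Unit ℝ)))
    (hWst : IsUnit (W + α • (B * Bᵀ))) :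
    (W + α • (B * Bᵀ))⁻¹ =
      (Matrix.fromBlocks W B Bᵀ (0 : Matrix Unit Unit ℝ))⁻¹.toBlocks₁₁ +
        (W + α • (B * Bᵀ))⁻¹ * B *
          (Matrix.fromBlocks W B Bᵀ (0 : Matrix Unit Unit ℝ))⁻¹.toBlocks₂₁ := by
  set M := Matrix.fromBlocks W B Bᵀ (0 : Matrix Unit Unit ℝ) with hMdef
  set G := M⁻¹.toBlocks₁₁ with hG
  set P := M⁻¹.toBlocks₁₂ with hP
  set Q := M⁻¹.toBlocks₂₁ with hQ
  set z := M⁻¹.toBlocks₂₂ with hz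
  have hinv : M⁻¹ = Matrix.fromBlocks G P Q z := (Matrix.fromBlocks_toBlocks _).symm
  have hM1 : M * M⁻¹ = 1 := Matrix.mul_nonsing_inv M ((Matrix.isUnit_iff_isUnit_det M).mp h𝒲)
  rw [hinv, hMdef, Matrix.fromBlocks_multiply, ← Matrix.fromBlocks_one] at hM1
  have h11 : W * G + B * Q = 1 := by
    have := congrArg Matrix.toBlocks₁₁ hM1
    simpa only [Matrix.toBlocks_fromBlocks₁₁] using this
  have h21 : Bᵀ * G = 0 := by
    have := congrArg Matrix.toBlocks₂₁ hM1
    simpa only [Matrix.toBlocks_fromBlocks₂₁, Matrix.zero_mul, add_zero] using this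
  have hWinv : (W + α • (B * Bᵀ)) * (W + α • (B * Bᵀ))⁻¹ = 1 :=
    Matrix.mul_nonsing_inv _ ((Matrix.isUnit_iff_isUnit_det _).mp hWst)
  have key : (W + α • (B * Bᵀ)) * (G + (W + α • (B * Bᵀ))⁻¹ * B * Q) = 1 := by
    rw [Matrix.mul_add,
      ← Matrix.mul_assoc (W + α • (B * Bᵀ)) ((W + α • (B * Bᵀ))⁻¹ * B) Q,
      ← Matrix.mul_assoc (W + α • (B * Bᵀ)) ((W + α • (B * Bᵀ))⁻¹) B,
      hWinv, Matrix.one_mul, Matrix.add_mul, Matrix.smul_mul,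
      Matrix.mul_assoc B Bᵀ G, h21]
    simpa using h11
  exact Matrix.inv_eq_right_inv key
end

section
/- (Single-level blockwise spectral norm bound.) Let I be a finite index set, M a real I × I matrix, C ∈ ℕ, and let P be a finite collection of pairs (τ, σ) of subsets of I such that: (i) the rectangles τ × σ for (τ, σ) ∈ P are pairwise disjoint; (ii) whenever M_{ij} ≠ 0 there is (τ, σ) ∈ P with i ∈ τ and j ∈ σ; (iii) for every index i ∈ I, the number of pairs (τ, σ) ∈ P with i ∈ τ is at most C, and the number of pairs (τ, σ) ∈ P with i ∈ σ is at most C. Then ‖M‖₂ ≤ C · max_{(τ,σ) ∈ P} ‖M|_{τ×σ}‖₂. -/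
open Matrix

/-- The spectral norm of a real matrix: the operator norm of the induced linear map
between Euclidean spaces. -/
noncomputable def matrixSpectralNorm {m n : Type*} [Fintype m] [Fintype n] [DecidableEq n]
    (M : Matrix m n ℝ) : ℝ :=
  ‖LinearMap.toContinuousLinearMap (Matrix.toEuclideanLin M)‖

lemma bilin_bound {m n : Type*} [Fintype m] [Fintype n] [DecidableEq n]
    (N : Matrix m n ℝ) (y : EuclideanSpace ℝ m) (x : EuclideanSpace ℝ n) :
    ∑ i, ∑ j, y i * N i j * x j ≤ matrixSpectralNorm N * (‖y‖ * ‖x‖) := by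
  have h1 : ∑ i, ∑ j, y i * N i j * x j = (inner ℝ y ((Matrix.toEuclideanLin N) x) : ℝ) := by
    simp only [PiLp.inner_apply, RCLike.inner_apply, starRingEnd_apply, star_trivial,
      Matrix.toEuclideanLin_apply, PiLp.toLp_apply,
      Matrix.mulVec, dotProduct, Finset.mul_sum, mul_assoc]
    exact Finset.sum_congr rfl fun i _ => by
      rw [Finset.sum_mul]; exact Finset.sum_congr rfl fun j _ => by ring
  rw [h1]
  calc (inner ℝ y ((Matrix.toEuclideanLin N) x) : ℝ) ≤ ‖y‖ * ‖(Matrix.toEuclideanLin N) x‖ :=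
        real_inner_le_norm _ _
    _ ≤ ‖y‖ * (matrixSpectralNorm N * ‖x‖) := by
        refine mul_le_mul_of_nonneg_left ?_ (norm_nonneg _)
        exact (LinearMap.toContinuousLinearMap (Matrix.toEuclideanLin N)).le_opNorm x
    _ = matrixSpectralNorm N * (‖y‖ * ‖x‖) := by ring

noncomputable def restr {I : Type*} (s : Finset I) (x : EuclideanSpace ℝ I) :
    EuclideanSpace ℝ s := (WithLp.equiv 2 (↥s → ℝ)).symm (fun j => x j)

lemma restr_norm_sq {I : Type*} (s : Finset I) (x : EuclideanSpace ℝ I) :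
    ‖restr s x‖ ^ 2 = ∑ j ∈ s, (x j) ^ 2 := by
  rw [EuclideanSpace.norm_eq, Real.sq_sqrt (by positivity), ← Finset.sum_coe_sort s]
  simp [restr, Real.norm_eq_abs, sq_abs]


/-- Single-level blockwise spectral norm bound: if the nonzero entries of `M` are covered
by pairwise disjoint rectangles `τ × σ`, and each index belongs to at most `C` row blocks
and at most `C` column blocks, then `‖M‖₂ ≤ C · max_{(τ,σ)} ‖M|_{τ×σ}‖₂`
(`sSup ∅ = 0` by convention). -/
theorem single_level_blockwise_norm_bound {I : Type*} [Fintype I] [DecidableEq I]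
    (M : Matrix I I ℝ) (C : ℕ) (P : Finset (Finset I × Finset I))
    (hdisj : (P : Set (Finset I × Finset I)).PairwiseDisjoint (fun p => p.1 ×ˢ p.2))
    (hcover : ∀ i j, M i j ≠ 0 → ∃ p ∈ P, i ∈ p.1 ∧ j ∈ p.2)
    (hrow : ∀ i : I, (P.filter (fun p => i ∈ p.1)).card ≤ C)
    (hcol : ∀ i : I, (P.filter (fun p => i ∈ p.2)).card ≤ C) :
    matrixSpectralNorm M ≤ C * sSup ((fun p : Finset I × Finset I =>
      matrixSpectralNorm (M.submatrix (fun a : ↥p.1 => (a : I)) (fun b : ↥p.2 => (b : I)))) ''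
        (P : Set (Finset I × Finset I))) := by
  set F : Finset I × Finset I → ℝ := fun p =>
    matrixSpectralNorm (M.submatrix (fun a : ↥p.1 => (a : I)) (fun b : ↥p.2 => (b : I))) with hF
  set B : ℝ := sSup (F '' (P : Set (Finset I × Finset I))) with hBdef
  have hB0 : 0 ≤ B := Real.sSup_nonneg (by
    rintro x ⟨p, -, rfl⟩; exact norm_nonneg _)
  have hBle : ∀ p ∈ P, F p ≤ B := fun p hp =>
    le_csSup ((P.finite_toSet.image F).bddAbove) ⟨p, hp, rfl⟩
  -- the counting bounds
  have hcount : ∀ (z : EuclideanSpace ℝ I) (side : Finset I × Finset I → Finset I),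
      (∀ i : I, (P.filter (fun p => i ∈ side p)).card ≤ C) →
      ∑ p ∈ P, ‖restr (side p) z‖ ^ 2 ≤ C * ‖z‖ ^ 2 := by
    intro z side hC
    have h1 : ∑ p ∈ P, ‖restr (side p) z‖ ^ 2
        = ∑ j : I, ((P.filter (fun p => j ∈ side p)).card : ℝ) * (z j) ^ 2 := by
      simp only [restr_norm_sq]
      rw [Finset.sum_comm' (s := P) (t := fun p => side p)
        (t' := Finset.univ) (s' := fun j => P.filter (fun p => j ∈ side p)) ?_]
      · simp [Finset.sum_const, nsmul_eq_mul]
      · intro p j; simp only [Finset.mem_filter, Finset.mem_univ, true_and, and_comm]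
    rw [h1, EuclideanSpace.norm_eq, Real.sq_sqrt (by positivity), Finset.mul_sum]
    refine Finset.sum_le_sum fun j _ => ?_
    have := hC j
    have hz : (z j)^2 = ‖z j‖^2 := by simp [Real.norm_eq_abs, sq_abs]
    rw [hz]
    exact mul_le_mul_of_nonneg_right (by exact_mod_cast this) (by positivity)
  -- the key bilinear estimate
  have key : ∀ x y : EuclideanSpace ℝ I,
      ∑ i, ∑ j, y i * M i j * x j ≤ (C : ℝ) * B * (‖x‖ * ‖y‖) := by
    intro x y
    set T : Finset (I × I) := P.biUnion (fun p => p.1 ×ˢ p.2) with hT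
    have h0 : ∑ i, ∑ j, y i * M i j * x j
        = ∑ q ∈ Finset.univ ×ˢ Finset.univ, y q.1 * M q.1 q.2 * x q.2 := by
      rw [Finset.sum_product]
    have h1 : ∑ q ∈ Finset.univ ×ˢ Finset.univ, y q.1 * M q.1 q.2 * x q.2
        = ∑ q ∈ T, y q.1 * M q.1 q.2 * x q.2 := by
      refine (Finset.sum_subset
        (fun q _ => Finset.mem_product.2 ⟨Finset.mem_univ _, Finset.mem_univ _⟩) ?_).symm
      intro q _ hq
      by_contra h
      have hM : M q.1 q.2 ≠ 0 := fun h0 => h (by simp [h0])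
      obtain ⟨p, hp, hi, hj⟩ := hcover q.1 q.2 hM
      exact hq (Finset.mem_biUnion.2 ⟨p, hp, Finset.mem_product.2 ⟨hi, hj⟩⟩)
    have h2 : ∑ q ∈ T, y q.1 * M q.1 q.2 * x q.2
        = ∑ p ∈ P, ∑ q ∈ p.1 ×ˢ p.2, y q.1 * M q.1 q.2 * x q.2 :=
      Finset.sum_biUnion hdisj
    have h3 : ∀ p ∈ P, ∑ q ∈ p.1 ×ˢ p.2, y q.1 * M q.1 q.2 * x q.2
        ≤ B * (‖restr p.1 y‖ * ‖restr p.2 x‖) := by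
      intro p hp
      have hbb := bilin_bound (M.submatrix (fun a : ↥p.1 => (a : I)) (fun b : ↥p.2 => (b : I)))
        (restr p.1 y) (restr p.2 x)
      have heq : ∑ q ∈ p.1 ×ˢ p.2, y q.1 * M q.1 q.2 * x q.2
          = ∑ i : ↥p.1, ∑ j : ↥p.2, (restr p.1 y) i *
              M.submatrix (fun a : ↥p.1 => (a : I)) (fun b : ↥p.2 => (b : I)) i j *
              (restr p.2 x) j := by
        rw [Finset.sum_product, ← Finset.sum_coe_sort p.1]
        refine Finset.sum_congr rfl fun i _ => ?_
        rw [← Finset.sum_coe_sort p.2]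
        rfl
      rw [heq]
      calc _ ≤ F p * (‖restr p.1 y‖ * ‖restr p.2 x‖) := hbb
        _ ≤ B * (‖restr p.1 y‖ * ‖restr p.2 x‖) :=
          mul_le_mul_of_nonneg_right (hBle p hp) (by positivity)
    have h4 : ∑ p ∈ P, B * (‖restr p.1 y‖ * ‖restr p.2 x‖)
        ≤ B * (Real.sqrt (∑ p ∈ P, ‖restr p.1 y‖^2) *
            Real.sqrt (∑ p ∈ P, ‖restr p.2 x‖^2)) := by
      rw [← Finset.mul_sum]
      refine mul_le_mul_of_nonneg_left ?_ hB0
      have hcs := Finset.sum_mul_sq_le_sq_mul_sq P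
        (fun p => ‖restr p.1 y‖) (fun p => ‖restr p.2 x‖)
      have hnn : 0 ≤ ∑ p ∈ P, ‖restr p.1 y‖ * ‖restr p.2 x‖ :=
        Finset.sum_nonneg fun p _ => by positivity
      calc ∑ p ∈ P, ‖restr p.1 y‖ * ‖restr p.2 x‖
          = Real.sqrt ((∑ p ∈ P, ‖restr p.1 y‖ * ‖restr p.2 x‖)^2) := (Real.sqrt_sq hnn).symm
        _ ≤ Real.sqrt ((∑ p ∈ P, ‖restr p.1 y‖^2) * ∑ p ∈ P, ‖restr p.2 x‖^2) :=
            Real.sqrt_le_sqrt hcs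
        _ = _ := Real.sqrt_mul (by positivity) _
    have h5y : Real.sqrt (∑ p ∈ P, ‖restr p.1 y‖^2) ≤ Real.sqrt C * ‖y‖ := by
      calc Real.sqrt (∑ p ∈ P, ‖restr p.1 y‖^2) ≤ Real.sqrt ((C : ℝ) * ‖y‖^2) :=
            Real.sqrt_le_sqrt (hcount y Prod.fst hrow)
        _ = Real.sqrt C * ‖y‖ := by
            rw [Real.sqrt_mul (by positivity), Real.sqrt_sq (norm_nonneg _)]
    have h5x : Real.sqrt (∑ p ∈ P, ‖restr p.2 x‖^2) ≤ Real.sqrt C * ‖x‖ := by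
      calc Real.sqrt (∑ p ∈ P, ‖restr p.2 x‖^2) ≤ Real.sqrt ((C : ℝ) * ‖x‖^2) :=
            Real.sqrt_le_sqrt (hcount x Prod.snd hcol)
        _ = Real.sqrt C * ‖x‖ := by
            rw [Real.sqrt_mul (by positivity), Real.sqrt_sq (norm_nonneg _)]
    have hCs : Real.sqrt C * Real.sqrt C = (C : ℝ) := Real.mul_self_sqrt (by positivity)
    calc ∑ i, ∑ j, y i * M i j * x j
        = ∑ p ∈ P, ∑ q ∈ p.1 ×ˢ p.2, y q.1 * M q.1 q.2 * x q.2 := by rw [h0, h1, h2]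
      _ ≤ ∑ p ∈ P, B * (‖restr p.1 y‖ * ‖restr p.2 x‖) := Finset.sum_le_sum h3
      _ ≤ B * (Real.sqrt (∑ p ∈ P, ‖restr p.1 y‖^2) *
            Real.sqrt (∑ p ∈ P, ‖restr p.2 x‖^2)) := h4
      _ ≤ B * ((Real.sqrt C * ‖y‖) * (Real.sqrt C * ‖x‖)) := by
          refine mul_le_mul_of_nonneg_left ?_ hB0
          exact mul_le_mul h5y h5x (Real.sqrt_nonneg _) (by positivity)
      _ = (C : ℝ) * B * (‖x‖ * ‖y‖) := by
          rw [show (Real.sqrt C * ‖y‖) * (Real.sqrt C * ‖x‖)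
              = (Real.sqrt C * Real.sqrt C) * (‖x‖ * ‖y‖) by ring, hCs]; ring
  refine ContinuousLinearMap.opNorm_le_bound _ (by positivity) fun x => ?_
  set v : EuclideanSpace ℝ I := (Matrix.toEuclideanLin M) x with hv
  show ‖v‖ ≤ (C : ℝ) * B * ‖x‖
  have hvsq : ‖v‖ ^ 2 = ∑ i, ∑ j, v i * M i j * x j := by
    rw [← real_inner_self_eq_norm_sq]
    simp only [PiLp.inner_apply, RCLike.inner_apply, starRingEnd_apply, star_trivial]
    refine Finset.sum_congr rfl fun i _ => ?_
    have hvi : v i = ∑ j, M i j * x j := by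
      simp only [hv, Matrix.toEuclideanLin_apply, PiLp.toLp_apply,
        Matrix.mulVec, dotProduct]
    nth_rewrite 2 [hvi]
    rw [Finset.mul_sum]
    exact Finset.sum_congr rfl fun j _ => (mul_assoc _ _ _).symm
  have hkey := key x v
  rw [← hvsq] at hkey
  rcases eq_or_lt_of_le (norm_nonneg v) with h0 | h0
  · rw [← h0]; positivity
  · have := (mul_le_mul_iff_of_pos_right h0).1 (by
      calc ‖v‖ * ‖v‖ = ‖v‖^2 := by ring
        _ ≤ (C : ℝ) * B * (‖x‖ * ‖v‖) := hkey
        _ = ((C : ℝ) * B * ‖x‖) * ‖v‖ := by ring)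
    exact this
end

section
/- (Low-rank matrix approximation from a low-dimensional approximating subspace.) Let m, n be finite index sets, A a real m × n matrix, r ∈ ℕ, ε ≥ 0, and let W ⊆ (m → ℝ) be a linear subspace with dim W ≤ r such that for every vector b : n → ℝ there exists w ∈ W with ‖A·b − w‖ ≤ ε·‖b‖ (Euclidean norms). Then there exists a real m × n matrix M of rank at most r such that ‖A − M‖₂ ≤ ε. -/
open Matrix

/-- Low-rank matrix approximation from a low-dimensional approximating subspace: if every
matrix-vector product `A b` can be approximated from a subspace `W` of dimension at most `r`
with error `ε ‖b‖`, then `A` admits a rank-`r` approximation with spectral-norm error `ε`. -/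
theorem low_rank_approx_from_subspace {m n : Type*}
    [Fintype m] [Fintype n] [DecidableEq m] [DecidableEq n]
    (A : Matrix m n ℝ) (r : ℕ) (ε : ℝ) (hε : 0 ≤ ε)
    (W : Submodule ℝ (EuclideanSpace ℝ m)) (hW : Module.finrank ℝ W ≤ r)
    (happrox : ∀ b : EuclideanSpace ℝ n,
      ∃ w ∈ W, ‖Matrix.toEuclideanLin A b - w‖ ≤ ε * ‖b‖) :
    ∃ M : Matrix m n ℝ, M.rank ≤ r ∧ matrixSpectralNorm (A - M) ≤ ε := by
  set L : EuclideanSpace ℝ n →ₗ[ℝ] EuclideanSpace ℝ m :=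
    W.subtype ∘ₗ (W.orthogonalProjectionOnto).toLinearMap ∘ₗ Matrix.toEuclideanLin A with hL
  set M : Matrix m n ℝ := Matrix.toEuclideanLin.symm L with hM
  have hML : Matrix.toEuclideanLin M = L := Matrix.toEuclideanLin.apply_symm_apply L
  refine ⟨M, ?_, ?_⟩
  · rw [Matrix.rank_eq_finrank_range_toLin M (PiLp.basisFun 2 ℝ m) (PiLp.basisFun 2 ℝ n)]
    have h1 : Matrix.toLin (PiLp.basisFun 2 ℝ n) (PiLp.basisFun 2 ℝ m) M = L := by
      rw [← Matrix.toEuclideanLin_eq_toLin]; exact hML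
    rw [h1]
    have hrange : LinearMap.range L ≤ W := by
      rintro x ⟨y, rfl⟩
      simp only [hL, LinearMap.comp_apply, Submodule.coe_subtype]
      exact Submodule.coe_mem _
    exact le_trans (Submodule.finrank_mono hrange) hW
  · apply ContinuousLinearMap.opNorm_le_bound _ hε
    intro b
    have hsub : Matrix.toEuclideanLin (A - M) b
        = Matrix.toEuclideanLin A b - L b := by
      rw [map_sub, hML]; rfl
    simp only [matrixSpectralNorm, LinearMap.coe_toContinuousLinearMap']
    rw [show (Matrix.toEuclideanLin (A - M)) b = Matrix.toEuclideanLin A b - L b from hsub]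
    obtain ⟨w, hwW, hw⟩ := happrox b
    have hmin : ‖Matrix.toEuclideanLin A b - W.orthogonalProjectionOnto (Matrix.toEuclideanLin A b)‖
        ≤ ‖Matrix.toEuclideanLin A b - w‖ := by
      rw [← Submodule.starProjection_apply, Submodule.starProjection_minimal]
      exact ciInf_le ⟨0, fun x ⟨y, hy⟩ => hy ▸ norm_nonneg _⟩ (⟨w, hwW⟩ : W)
    exact le_trans hmin hw
end

section
/- (Invertibility of the saddle-point matrix.) Let N be a finite index set, W a real symmetric positive semidefinite N × N matrix, and B a nonzero real N × 1 matrix (column vector). Assume that the only vector x : N → ℝ satisfying both W·x = 0 and Bᵀ·x = 0 is x = 0. Then the saddle-point matrix 𝒲 := [[W, B],[Bᵀ, 0]] (a square matrix of size |N|+1, with 1 × 1 zero block) is invertible. -/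
open Matrix

/-- Invertibility of the saddle-point matrix: if `W` is symmetric positive semidefinite,
`B ≠ 0`, and the only vector in the kernel of `W` annihilated by `Bᵀ` is `0`, then the
saddle-point matrix `[[W, B],[Bᵀ, 0]]` is invertible. -/
theorem saddle_point_matrix_invertible {N : Type*} [Fintype N] [DecidableEq N]
    (W : Matrix N N ℝ) (B : Matrix N Unit ℝ) (hB : B ≠ 0)
    (hW : W.PosSemidef)
    (hker : ∀ x : N → ℝ, W.mulVec x = 0 → Bᵀ.mulVec x = 0 → x = 0) :
    IsUnit (Matrix.fromBlocks W B Bᵀ (0 : Matrix Unit Unit ℝ)) := by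
  rw [← Matrix.mulVec_injective_iff_isUnit]
  set M := Matrix.fromBlocks W B Bᵀ (0 : Matrix Unit Unit ℝ) with hM
  suffices key : ∀ v, M *ᵥ v = 0 → v = 0 by
    intro u v huv
    have := key (u - v) (by rw [Matrix.mulVec_sub, huv, sub_self])
    exact sub_eq_zero.mp this
  intro v hv
  rw [fromBlocks_mulVec] at hv
  set x : N → ℝ := v ∘ Sum.inl
  set y : Unit → ℝ := v ∘ Sum.inr
  have h1 : W *ᵥ x + B *ᵥ y = 0 := by
    funext i
    simpa using congrFun hv (Sum.inl i)
  have h2 : Bᵀ *ᵥ x = 0 := by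
    funext i
    have := congrFun hv (Sum.inr i)
    simpa using this
  -- x ⬝ᵥ W x = 0
  have hq : x ⬝ᵥ W *ᵥ x = 0 := by
    have hBy : x ⬝ᵥ B *ᵥ y = 0 := by
      rw [dotProduct_mulVec, ← mulVec_transpose, h2, zero_dotProduct]
    have := congrArg (fun w => x ⬝ᵥ w) h1
    simpa [dotProduct_add, hBy] using this
  have hWx : W *ᵥ x = 0 := by
    have := (hW.dotProduct_mulVec_zero_iff x).mp (by simpa using hq)
    exact this
  have hBy0 : B *ᵥ y = 0 := by
    have := h1
    rw [hWx, zero_add] at this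
    exact this
  have hx0 : x = 0 := hker x hWx h2
  have hy0 : y = 0 := by
    by_contra hy
    apply hB
    have hyu : y () ≠ 0 := fun h => hy (funext fun i => by cases i; exact h)
    ext i j
    have := congrFun hBy0 i
    simp [mulVec, dotProduct] at this
    cases j
    exact this.resolve_right hyu
  funext i
  cases i with
  | inl i => exact congrFun hx0 i
  | inr i => exact congrFun hy0 i
end
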